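/- arXiv:1508.06890 — 5 statements merged into one kernel-verified Lean document; each statement's English description precedes it below -/
import Mathlib

section
/- Let x : [0,1] → ℝ^d be a continuously differentiable path. For any words I of length m and J of length n over {1,…,d}, the iterated integrals of x satisfy the shuffle product formula X^I_{0,1} · X^J_{0,1} = ∑_{σ ∈ S(m,n)} X^{σ·(IJ)}_{0,1}, where S(m,n) is the set of (m,n)-shuffles, i.e. permutations σ of {1,…,m+n} whose inverse is increasing on {1,…,m} and on {m+1,…,m+n}, IJ denotes the concatenated word of length m+n, and σ·(IJ) is the word whose k-th letter is the σ(k)-th letter of IJ. -/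
open MeasureTheory

/-- The iterated integral of a continuously differentiable path `x : ℝ → ℝ^d`
over the word `I`, on the interval `[0,1]`:
`X^I_{0,1} = ∫_{0<t_1<⋯<t_n<1} x'_{i_1}(t_1) ⋯ x'_{i_n}(t_n) dt`. -/
noncomputable def iterInt {d : ℕ} (x : ℝ → Fin d → ℝ) {n : ℕ} (I : Fin n → Fin d) : ℝ :=
  ∫ t in {t : Fin n → ℝ | (∀ k, t k ∈ Set.Icc (0 : ℝ) 1) ∧ StrictMono t},
    ∏ k, deriv (fun s => x s (I k)) (t k)

/-- `σ` is an `(m,n)`-shuffle: a permutation of `{0,…,m+n-1}` whose inverse is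
increasing on the first `m` and on the last `n` positions. -/
def IsShuffle (m n : ℕ) (σ : Equiv.Perm (Fin (m + n))) : Prop :=
  (∀ i j : Fin (m + n), (i : ℕ) < (j : ℕ) → (j : ℕ) < m → σ⁻¹ i < σ⁻¹ j) ∧
  (∀ i j : Fin (m + n), m ≤ (i : ℕ) → (i : ℕ) < (j : ℕ) → σ⁻¹ i < σ⁻¹ j)

lemma measurableSet_strictMonoSet {k : ℕ} :
    MeasurableSet {t : Fin k → ℝ | StrictMono t} := by
  have h : {t : Fin k → ℝ | StrictMono t} =
      ⋂ (a : Fin k) (b : Fin k) (_ : a < b), {t : Fin k → ℝ | t a < t b} := by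
    ext t
    simp only [Set.mem_setOf_eq, Set.mem_iInter]
    exact ⟨fun h a b hab => h hab, fun h a b hab => h a b hab⟩
  rw [h]
  exact MeasurableSet.iInter fun a => MeasurableSet.iInter fun b => MeasurableSet.iInter fun _ =>
    measurableSet_lt (measurable_pi_apply a) (measurable_pi_apply b)

lemma volume_eq_coords_null {k : ℕ} {i j : Fin k} (hij : i ≠ j) :
    (volume : Measure (Fin k → ℝ)) {u : Fin k → ℝ | u i = u j} = 0 := by
  have hset : {u : Fin k → ℝ | u i = u j} =
      (LinearMap.ker ((LinearMap.proj i : (Fin k → ℝ) →ₗ[ℝ] ℝ) - LinearMap.proj j) : Set _) := by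
    ext u
    simp [LinearMap.mem_ker, sub_eq_zero, eq_comm]
  rw [hset]
  apply Measure.addHaar_submodule
  intro htop
  have h1 : (Pi.single i (1:ℝ)) ∈ LinearMap.ker
      ((LinearMap.proj i : (Fin k → ℝ) →ₗ[ℝ] ℝ) - LinearMap.proj j) := by
    rw [htop]; trivial
  simp [LinearMap.mem_ker, Pi.single_apply, hij.symm, sub_eq_zero] at h1

lemma setIntegral_comp_perm {k : ℕ} (σ : Equiv.Perm (Fin k)) (f : (Fin k → ℝ) → ℝ)
    (s : Set (Fin k → ℝ)) :
    ∫ u in {u : Fin k → ℝ | u ∘ ⇑σ ∈ s}, f (u ∘ ⇑σ) = ∫ t in s, f t := by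
  set e : Fin k ≃ Fin k := σ.symm with he
  have hmp := volume_measurePreserving_piCongrLeft (fun _ : Fin k => ℝ) e
  have hemb : MeasurableEmbedding (MeasurableEquiv.piCongrLeft (fun _ : Fin k => ℝ) e) :=
    (MeasurableEquiv.piCongrLeft (fun _ : Fin k => ℝ) e).measurableEmbedding
  have happ : ⇑(MeasurableEquiv.piCongrLeft (fun _ : Fin k => ℝ) e) = fun u => u ∘ ⇑σ := by
    funext u
    funext j
    conv_lhs => rw [show j = e (e.symm j) by simp]
    rw [MeasurableEquiv.piCongrLeft_apply_apply]
    rfl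
  have := hmp.setIntegral_preimage_emb hemb f s
  rw [happ] at this
  exact this

lemma continuous_deriv_coord {d : ℕ} {x : ℝ → Fin d → ℝ} (hx : ContDiff ℝ 1 x) (i : Fin d) :
    Continuous (deriv (fun s => x s i)) := by
  have h : ContDiff ℝ 1 (fun s => x s i) :=
    (ContinuousLinearMap.proj i : (Fin d → ℝ) →L[ℝ] ℝ).contDiff.comp hx
  exact h.continuous_deriv le_rfl

lemma integrableOn_prod_deriv {d : ℕ} {x : ℝ → Fin d → ℝ} (hx : ContDiff ℝ 1 x)
    {k : ℕ} (L : Fin k → Fin d) {s : Set (Fin k → ℝ)}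
    (hsub : s ⊆ Set.pi Set.univ fun _ => Set.Icc (0:ℝ) 1) :
    IntegrableOn (fun t => ∏ j, deriv (fun s => x s (L j)) (t j)) s := by
  have hc : Continuous fun t : Fin k → ℝ => ∏ j, deriv (fun s => x s (L j)) (t j) :=
    continuous_finset_prod _ fun j _ =>
      (continuous_deriv_coord hx (L j)).comp (continuous_apply j)
  have hcp : IsCompact (Set.pi Set.univ fun _ : Fin k => Set.Icc (0:ℝ) 1) :=
    isCompact_univ_pi fun _ => isCompact_Icc
  exact ((hc.continuousOn).integrableOn_compact hcp).mono_set hsub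

open scoped Classical in
/-- Shuffle product formula for iterated integrals of a C¹ path:
`X^I_{0,1} ⬝ X^J_{0,1} = ∑_{σ ∈ S(m,n)} X^{σ·(IJ)}_{0,1}`. -/
theorem shuffle_product_formula {d : ℕ} (x : ℝ → Fin d → ℝ) (hx : ContDiff ℝ 1 x)
    {m n : ℕ} (I : Fin m → Fin d) (J : Fin n → Fin d) :
    iterInt x I * iterInt x J =
      ∑ σ ∈ Finset.univ.filter (fun σ : Equiv.Perm (Fin (m + n)) => IsShuffle m n σ),
        iterInt x (fun k => Fin.append I J (σ k)) := by
  classical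
  set A : Fin (m+n) → Fin d := Fin.append I J with hA
  set f : (Fin (m+n) → ℝ) → ℝ := fun u => ∏ k, deriv (fun s => x s (A k)) (u k) with hf
  set Δm : Set (Fin m → ℝ) := {t | (∀ k, t k ∈ Set.Icc (0:ℝ) 1) ∧ StrictMono t} with hΔm
  set Δn : Set (Fin n → ℝ) := {t | (∀ k, t k ∈ Set.Icc (0:ℝ) 1) ∧ StrictMono t} with hΔn
  set Δ : Set (Fin (m+n) → ℝ) := {t | (∀ k, t k ∈ Set.Icc (0:ℝ) 1) ∧ StrictMono t} with hΔ
  set S : Set (Fin (m+n) → ℝ) := {u | (∀ k, u k ∈ Set.Icc (0:ℝ) 1) ∧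
      StrictMono (fun i : Fin m => u (Fin.castAdd n i)) ∧
      StrictMono (fun j : Fin n => u (Fin.natAdd m j))} with hS
  set T : Equiv.Perm (Fin (m+n)) → Set (Fin (m+n) → ℝ) :=
    fun σ => {u | (∀ k, u k ∈ Set.Icc (0:ℝ) 1) ∧ StrictMono (u ∘ ⇑σ)} with hT
  set sh : Finset (Equiv.Perm (Fin (m+n))) :=
    Finset.univ.filter (fun σ => IsShuffle m n σ) with hsh
  -- Step 1 : product equals integral over S
  have step1 : iterInt x I * iterInt x J = ∫ u in S, f u := by
    set Φ : (Fin (m+n) → ℝ) ≃ᵐ (Fin m → ℝ) × (Fin n → ℝ) :=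
      (MeasurableEquiv.piCongrLeft (fun _ : Fin (m+n) => ℝ) finSumFinEquiv).symm.trans
        (MeasurableEquiv.sumPiEquivProdPi (fun _ : Fin m ⊕ Fin n => ℝ)) with hΦdef
    have hmp : MeasurePreserving Φ volume volume :=
      (volume_measurePreserving_sumPiEquivProdPi _).comp
        ((volume_measurePreserving_piCongrLeft (fun _ : Fin (m+n) => ℝ) finSumFinEquiv).symm _)
    have hΦ1 : ∀ u : Fin (m+n) → ℝ, (Φ u).1 = fun i : Fin m => u (Fin.castAdd n i) := by
      intro u; funext i
      show u (finSumFinEquiv (Sum.inl i)) = _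
      rw [finSumFinEquiv_apply_left]
    have hΦ2 : ∀ u : Fin (m+n) → ℝ, (Φ u).2 = fun j : Fin n => u (Fin.natAdd m j) := by
      intro u; funext j
      show u (finSumFinEquiv (Sum.inr j)) = _
      rw [finSumFinEquiv_apply_right]
    have hpre : Φ ⁻¹' (Δm ×ˢ Δn) = S := by
      ext u
      simp only [Set.mem_preimage, Set.mem_prod, hΦ1 u, hΦ2 u, hΔm, hΔn, hS, Set.mem_setOf_eq]
      constructor
      · rintro ⟨⟨h1, h2⟩, h3, h4⟩
        exact ⟨fun k => Fin.addCases h1 h3 k, h2, h4⟩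
      · rintro ⟨h1, h2, h3⟩
        exact ⟨⟨fun i => h1 _, h2⟩, fun j => h1 _, h3⟩
    have hint : ∀ u : Fin (m+n) → ℝ,
        (∏ k, deriv (fun s => x s (I k)) ((Φ u).1 k)) *
        (∏ k, deriv (fun s => x s (J k)) ((Φ u).2 k)) = f u := by
      intro u
      rw [hΦ1 u, hΦ2 u, hf]
      simp only [hA, Fin.prod_univ_add, Fin.append_left, Fin.append_right]
    calc iterInt x I * iterInt x J
        = ∫ z in (Δm ×ˢ Δn), (∏ k, deriv (fun s => x s (I k)) (z.1 k)) *
            (∏ k, deriv (fun s => x s (J k)) (z.2 k)) ∂(volume.prod volume) :=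
          (setIntegral_prod_mul _ _ _ _).symm
      _ = ∫ z in (Δm ×ˢ Δn), (∏ k, deriv (fun s => x s (I k)) (z.1 k)) *
            (∏ k, deriv (fun s => x s (J k)) (z.2 k)) := by rw [← Measure.volume_eq_prod]
      _ = ∫ u in Φ ⁻¹' (Δm ×ˢ Δn), (∏ k, deriv (fun s => x s (I k)) ((Φ u).1 k)) *
            (∏ k, deriv (fun s => x s (J k)) ((Φ u).2 k)) :=
          (hmp.setIntegral_preimage_emb Φ.measurableEmbedding _ _).symm
      _ = ∫ u in S, f u := by
          rw [hpre]
          congr 1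
          funext u
          exact hint u

  -- basic measurability and integrability
  have hmeasT : ∀ σ : Equiv.Perm (Fin (m+n)), MeasurableSet (T σ) := by
    intro σ
    have h1 : MeasurableSet {u : Fin (m+n) → ℝ | ∀ k, u k ∈ Set.Icc (0:ℝ) 1} := by
      have heq : {u : Fin (m+n) → ℝ | ∀ k, u k ∈ Set.Icc (0:ℝ) 1} =
          Set.pi Set.univ fun _ => Set.Icc (0:ℝ) 1 := by
        ext u; exact ⟨fun h k _ => h k, fun h k => h k trivial⟩
      rw [heq]; exact MeasurableSet.univ_pi fun _ => measurableSet_Icc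
    have hmσ : Measurable (fun u : Fin (m+n) → ℝ => u ∘ ⇑σ) :=
      measurable_pi_lambda _ fun k => measurable_pi_apply (σ k)
    exact h1.inter (hmσ measurableSet_strictMonoSet)
  have hcube : ∀ σ : Equiv.Perm (Fin (m+n)),
      T σ ⊆ Set.pi Set.univ fun _ => Set.Icc (0:ℝ) 1 := by
    rintro σ u ⟨h1, _⟩ k _
    exact h1 k
  have hintegT : ∀ σ : Equiv.Perm (Fin (m+n)), IntegrableOn f (T σ) := by
    intro σ
    exact integrableOn_prod_deriv hx A (hcube σ)
  -- T σ ⊆ S for shuffles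
  have hsubS : ∀ σ : Equiv.Perm (Fin (m+n)), IsShuffle m n σ → T σ ⊆ S := by
    rintro σ hσ u ⟨h1, h2⟩
    refine ⟨h1, ?_, ?_⟩
    · intro a b hab
      have hlt : σ⁻¹ (Fin.castAdd n a) < σ⁻¹ (Fin.castAdd n b) := by
        apply hσ.1
        · simpa using (show (a:ℕ) < (b:ℕ) from hab)
        · simpa using b.isLt
      have := h2 hlt
      simpa [Equiv.Perm.inv_def] using this
    · intro a b hab
      have hlt : σ⁻¹ (Fin.natAdd m a) < σ⁻¹ (Fin.natAdd m b) := by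
        apply hσ.2
        · simp
        · simpa using (show (a:ℕ) < (b:ℕ) from hab)
      have := h2 hlt
      simpa [Equiv.Perm.inv_def] using this
  -- disjointness
  have hdisj : ∀ σ τ : Equiv.Perm (Fin (m+n)), σ ≠ τ → Disjoint (T σ) (T τ) := by
    intro σ τ hne
    rw [Set.disjoint_left]
    rintro u ⟨_, h2⟩ ⟨_, h4⟩
    have huinj : Function.Injective u := by
      intro a b hab
      have h := h2.injective (show (u ∘ ⇑σ) (σ.symm a) = (u ∘ ⇑σ) (σ.symm b) by
        simp [Function.comp, hab])
      simpa using congrArg σ h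
    have heq := Tuple.unique_monotone h2.monotone h4.monotone
    exact hne (Equiv.ext fun k => huinj (congrFun heq k))
  -- covering
  have hcov : ∀ u, u ∈ S → Function.Injective u → ∃ σ, IsShuffle m n σ ∧ u ∈ T σ := by
    intro u hu huinj
    refine ⟨Tuple.sort u, ?_, hu.1, ?_⟩
    · constructor
      · intro i j hij hjm
        have him : (i:ℕ) < m := lt_trans hij hjm
        have hui : u i < u j := by
          have h := hu.2.1 (show (⟨(i:ℕ), him⟩ : Fin m) < ⟨(j:ℕ), hjm⟩ from hij)
          have e1 : Fin.castAdd n (⟨(i:ℕ), him⟩ : Fin m) = i := by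
            apply Fin.ext; simp
          have e2 : Fin.castAdd n (⟨(j:ℕ), hjm⟩ : Fin m) = j := by
            apply Fin.ext; simp
          have h' : u (Fin.castAdd n (⟨(i:ℕ), him⟩ : Fin m)) <
              u (Fin.castAdd n (⟨(j:ℕ), hjm⟩ : Fin m)) := h
          rwa [e1, e2] at h'
        have hsm : StrictMono (u ∘ ⇑(Tuple.sort u)) :=
          (Tuple.monotone_sort u).strictMono_of_injective
            (huinj.comp (Equiv.injective _))
        refine hsm.lt_iff_lt.mp ?_
        show u (Tuple.sort u ((Tuple.sort u)⁻¹ i)) < u (Tuple.sort u ((Tuple.sort u)⁻¹ j))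
        rw [Equiv.Perm.inv_def, Equiv.apply_symm_apply, Equiv.apply_symm_apply]
        exact hui
      · intro i j hmi hij
        have hjmn : (j:ℕ) - m < n := by omega
        have himn : (i:ℕ) - m < n := by omega
        have hui : u i < u j := by
          have h := hu.2.2 (show (⟨(i:ℕ) - m, himn⟩ : Fin n) < ⟨(j:ℕ) - m, hjmn⟩ from by
            simp only [Fin.mk_lt_mk]; omega)
          have e1 : Fin.natAdd m (⟨(i:ℕ) - m, himn⟩ : Fin n) = i := by
            apply Fin.ext; simp; omega
          have e2 : Fin.natAdd m (⟨(j:ℕ) - m, hjmn⟩ : Fin n) = j := by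
            apply Fin.ext; simp; omega
          have h' : u (Fin.natAdd m (⟨(i:ℕ) - m, himn⟩ : Fin n)) <
              u (Fin.natAdd m (⟨(j:ℕ) - m, hjmn⟩ : Fin n)) := h
          rwa [e1, e2] at h'
        have hsm : StrictMono (u ∘ ⇑(Tuple.sort u)) :=
          (Tuple.monotone_sort u).strictMono_of_injective
            (huinj.comp (Equiv.injective _))
        refine hsm.lt_iff_lt.mp ?_
        show u (Tuple.sort u ((Tuple.sort u)⁻¹ i)) < u (Tuple.sort u ((Tuple.sort u)⁻¹ j))
        rw [Equiv.Perm.inv_def, Equiv.apply_symm_apply, Equiv.apply_symm_apply]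
        exact hui
    · exact (Tuple.monotone_sort u).strictMono_of_injective
        (huinj.comp (Equiv.injective _))
  -- a.e. equality of S and the union
  have hUsub : (⋃ σ ∈ sh, T σ) ⊆ S := by
    refine Set.iUnion₂_subset fun σ hσ => hsubS σ ?_
    exact (Finset.mem_filter.mp hσ).2
  have hnull : volume (S \ ⋃ σ ∈ sh, T σ) = 0 := by
    have hsub2 : S \ (⋃ σ ∈ sh, T σ) ⊆
        ⋃ (p : Fin (m+n) × Fin (m+n)) (_ : p.1 ≠ p.2), {u : Fin (m+n) → ℝ | u p.1 = u p.2} := by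
      rintro u ⟨huS, huU⟩
      by_contra hnot
      simp only [Set.mem_iUnion, Set.mem_setOf_eq, not_exists] at hnot
      have huinj : Function.Injective u := by
        intro a b hab
        by_contra hne
        exact hnot (a, b) hne hab
      obtain ⟨σ, hσ, hmem⟩ := hcov u huS huinj
      refine huU ?_
      refine Set.mem_biUnion ?_ hmem
      rw [hsh]
      exact Finset.mem_filter.mpr ⟨Finset.mem_univ _, hσ⟩
    refine measure_mono_null hsub2 ?_
    refine measure_iUnion_null fun p => ?_
    refine measure_iUnion_null fun hp => ?_
    exact volume_eq_coords_null hp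
  have haeq : S =ᵐ[volume] ⋃ σ ∈ sh, T σ := by
    rw [MeasureTheory.ae_eq_set]
    refine ⟨hnull, ?_⟩
    rw [Set.diff_eq_empty.2 hUsub]
    simp
  -- splitting the integral
  have step3 : (∫ u in S, f u) = ∑ σ ∈ sh, ∫ u in T σ, f u := by
    rw [setIntegral_congr_set haeq]
    exact integral_biUnion_finset sh (fun σ _ => hmeasT σ)
      (fun σ _ τ _ hne => hdisj σ τ hne) (fun σ _ => hintegT σ)
  -- identifying each term
  have step4 : ∀ σ : Equiv.Perm (Fin (m+n)),
      (∫ u in T σ, f u) = iterInt x (fun k => A (σ k)) := by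
    intro σ
    have key := setIntegral_comp_perm σ
      (fun t => ∏ k, deriv (fun s => x s (A (σ k))) (t k)) Δ
    have hTσ : {u : Fin (m+n) → ℝ | u ∘ ⇑σ ∈ Δ} = T σ := by
      ext u
      simp only [hΔ, hT, Set.mem_setOf_eq, Function.comp_apply]
      constructor
      · rintro ⟨h1, h2⟩
        refine ⟨fun k => ?_, h2⟩
        have := h1 (σ.symm k)
        simpa using this
      · rintro ⟨h1, h2⟩
        exact ⟨fun k => h1 _, h2⟩
    have hfun : ∀ u : Fin (m+n) → ℝ,
        (∏ k, deriv (fun s => x s (A (σ k))) ((u ∘ ⇑σ) k)) = f u := by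
      intro u
      rw [hf]
      exact Equiv.prod_comp σ (fun j => deriv (fun s => x s (A j)) (u j))
    have hislhs : (∫ u in {u : Fin (m+n) → ℝ | u ∘ ⇑σ ∈ Δ},
        (fun t => ∏ k, deriv (fun s => x s (A (σ k))) (t k)) (u ∘ ⇑σ)) = ∫ u in T σ, f u := by
      rw [hTσ]
      congr 1
      funext u
      exact hfun u
    rw [← hislhs, key]
    rfl
  rw [step1, step3]
  exact Finset.sum_congr rfl fun σ _ => step4 σ
end

section
/- For every p ∈ (1,2) there exists θ* ∈ (0, π) such that for all θ₀ ∈ (0, θ*], the function f(θ) = sin^p(θ/2) + sin^p((θ₀ − θ)/2) is convex on the interval [0, θ₀], with f''(θ) > 0 for θ ∈ (0, θ₀). -/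
open Real

private lemma acc_d1 (p θ₀ : ℝ) (hp1 : 1 ≤ p) (x : ℝ) :
    HasDerivAt (fun θ => sin (θ / 2) ^ p + sin ((θ₀ - θ) / 2) ^ p)
      (p / 2 * (sin (x / 2) ^ (p - 1) * cos (x / 2))
        - p / 2 * (sin ((θ₀ - x) / 2) ^ (p - 1) * cos ((θ₀ - x) / 2))) x := by
  have h1 : HasDerivAt (fun θ : ℝ => sin (θ / 2)) (cos (x / 2) * (1 / 2)) x := by
    have := (Real.hasDerivAt_sin (x / 2)).comp x ((hasDerivAt_id x).div_const 2)
    exact this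
  have h2 : HasDerivAt (fun θ : ℝ => sin ((θ₀ - θ) / 2)) (cos ((θ₀ - x) / 2) * (-(1 / 2))) x := by
    have hi : HasDerivAt (fun θ : ℝ => (θ₀ - θ) / 2) (-(1 / 2)) x := by
      have h := ((hasDerivAt_const x θ₀).sub (hasDerivAt_id x)).div_const 2
      refine h.congr_deriv ?_
      norm_num
    have := (Real.hasDerivAt_sin ((θ₀ - x) / 2)).comp x hi
    exact this
  have H := (h1.rpow_const (Or.inr hp1)).add (h2.rpow_const (Or.inr hp1))
  refine H.congr_deriv ?_
  ring

private lemma acc_d2 (p θ₀ : ℝ) (x : ℝ) (hs1 : 0 < sin (x / 2))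
    (hs2 : 0 < sin ((θ₀ - x) / 2)) :
    HasDerivAt (fun y => p / 2 * (sin (y / 2) ^ (p - 1) * cos (y / 2))
        - p / 2 * (sin ((θ₀ - y) / 2) ^ (p - 1) * cos ((θ₀ - y) / 2)))
      (p / 4 * (sin (x / 2) ^ (p - 2) * ((p - 1) * cos (x / 2) ^ 2 - sin (x / 2) ^ 2))
        + p / 4 * (sin ((θ₀ - x) / 2) ^ (p - 2) *
            ((p - 1) * cos ((θ₀ - x) / 2) ^ 2 - sin ((θ₀ - x) / 2) ^ 2))) x := by
  have h1 : HasDerivAt (fun θ : ℝ => sin (θ / 2)) (cos (x / 2) * (1 / 2)) x := by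
    have := (Real.hasDerivAt_sin (x / 2)).comp x ((hasDerivAt_id x).div_const 2)
    exact this
  have hc1 : HasDerivAt (fun θ : ℝ => cos (θ / 2)) (-sin (x / 2) * (1 / 2)) x := by
    have := (Real.hasDerivAt_cos (x / 2)).comp x ((hasDerivAt_id x).div_const 2)
    exact this
  have hi : HasDerivAt (fun θ : ℝ => (θ₀ - θ) / 2) (-(1 / 2)) x := by
    have h := ((hasDerivAt_const x θ₀).sub (hasDerivAt_id x)).div_const 2
    refine h.congr_deriv ?_
    norm_num
  have h2 : HasDerivAt (fun θ : ℝ => sin ((θ₀ - θ) / 2)) (cos ((θ₀ - x) / 2) * (-(1 / 2))) x := by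
    have := (Real.hasDerivAt_sin ((θ₀ - x) / 2)).comp x hi
    exact this
  have hc2 : HasDerivAt (fun θ : ℝ => cos ((θ₀ - θ) / 2))
      (-sin ((θ₀ - x) / 2) * (-(1 / 2))) x := by
    have := (Real.hasDerivAt_cos ((θ₀ - x) / 2)).comp x hi
    exact this
  have H1 := ((h1.rpow_const (p := p - 1) (Or.inl hs1.ne')).mul hc1).const_mul (p / 2)
  have H2 := ((h2.rpow_const (p := p - 1) (Or.inl hs2.ne')).mul hc2).const_mul (p / 2)
  have H := H1.sub H2
  refine H.congr_deriv ?_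
  have e1 : sin (x / 2) ^ (p - 1) = sin (x / 2) ^ (p - 2) * sin (x / 2) := by
    rw [show p - 1 = (p - 2) + 1 by ring, Real.rpow_add hs1, Real.rpow_one]
  have e2 : sin ((θ₀ - x) / 2) ^ (p - 1)
      = sin ((θ₀ - x) / 2) ^ (p - 2) * sin ((θ₀ - x) / 2) := by
    rw [show p - 1 = (p - 2) + 1 by ring, Real.rpow_add hs2, Real.rpow_one]
  have e3 : sin (x / 2) ^ ((p - 1) - 1) = sin (x / 2) ^ (p - 2) := by ring_nf
  have e4 : sin ((θ₀ - x) / 2) ^ ((p - 1) - 1) = sin ((θ₀ - x) / 2) ^ (p - 2) := by ring_nf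
  rw [e3, e4] at *
  rw [e1, e2]
  ring

private lemma acc_pos (p : ℝ) (hp : p ∈ Set.Ioo (1 : ℝ) 2) (a : ℝ)
    (ha : 0 < a) (ha2 : a < 2 * Real.arctan (Real.sqrt (p - 1))) :
    0 < p / 4 * (sin (a / 2) ^ (p - 2) * ((p - 1) * cos (a / 2) ^ 2 - sin (a / 2) ^ 2)) := by
  obtain ⟨hp1, hp2⟩ := hp
  have hsq : Real.sqrt (p - 1) ^ 2 = p - 1 := Real.sq_sqrt (by linarith)
  have hlt : a / 2 < Real.arctan (Real.sqrt (p - 1)) := by linarith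
  have hhalf : a / 2 < π / 2 := lt_trans hlt (Real.arctan_lt_pi_div_two _)
  have hs : 0 < sin (a / 2) :=
    Real.sin_pos_of_pos_of_lt_pi (by linarith) (by linarith [Real.pi_pos])
  have hc : 0 < cos (a / 2) :=
    Real.cos_pos_of_mem_Ioo ⟨by linarith [Real.pi_pos], hhalf⟩
  have htan : Real.tan (a / 2) < Real.sqrt (p - 1) := by
    have := Real.tan_lt_tan_of_nonneg_of_lt_pi_div_two (le_of_lt (by linarith : (0:ℝ) < a / 2))
      (Real.arctan_lt_pi_div_two _) hlt
    rwa [Real.tan_arctan] at this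
  rw [Real.tan_eq_sin_div_cos, div_lt_iff₀ hc] at htan
  have key : 0 < (p - 1) * cos (a / 2) ^ 2 - sin (a / 2) ^ 2 := by
    nlinarith [Real.sqrt_nonneg (p - 1)]
  have hrp : 0 < sin (a / 2) ^ (p - 2) := Real.rpow_pos_of_pos hs _
  have : 0 < p / 4 := by linarith
  positivity

/-- For `p ∈ (1,2)` there is `θ* ∈ (0,π)` such that for all `θ₀ ∈ (0,θ*]`, the function
`f(θ) = sin^p(θ/2) + sin^p((θ₀ - θ)/2)` is convex on `[0,θ₀]`, with `f'' > 0` on `(0,θ₀)`. -/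
theorem arc_chord_function_convex (p : ℝ) (hp : p ∈ Set.Ioo (1 : ℝ) 2) :
    ∃ θs ∈ Set.Ioo (0 : ℝ) π, ∀ θ₀ ∈ Set.Ioc (0 : ℝ) θs,
      ConvexOn ℝ (Set.Icc 0 θ₀) (fun θ => sin (θ / 2) ^ p + sin ((θ₀ - θ) / 2) ^ p) ∧
      ∀ θ ∈ Set.Ioo (0 : ℝ) θ₀,
        0 < deriv (deriv (fun θ => sin (θ / 2) ^ p + sin ((θ₀ - θ) / 2) ^ p)) θ := by
  obtain ⟨hp1, hp2⟩ := hp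
  set θs := 2 * Real.arctan (Real.sqrt (p - 1)) with hθs
  have hsqrt : 0 < Real.sqrt (p - 1) := Real.sqrt_pos.mpr (by linarith)
  have hθs0 : 0 < θs := by
    have h0 : Real.arctan 0 < Real.arctan (Real.sqrt (p - 1)) := Real.arctan_strictMono hsqrt
    rw [Real.arctan_zero] at h0
    rw [hθs]; linarith
  have hθsπ : θs < π := by
    have := Real.arctan_lt_pi_div_two (Real.sqrt (p - 1))
    rw [hθs]; linarith
  refine ⟨θs, ⟨hθs0, hθsπ⟩, fun θ₀ hθ₀ => ?_⟩
  obtain ⟨hθ₀0, hθ₀s⟩ := hθ₀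
  have key : ∀ θ ∈ Set.Ioo (0 : ℝ) θ₀,
      0 < deriv (deriv (fun θ => sin (θ / 2) ^ p + sin ((θ₀ - θ) / 2) ^ p)) θ := by
    intro θ hθ
    obtain ⟨hθ0, hθθ₀⟩ := hθ
    have hd1 : deriv (fun θ => sin (θ / 2) ^ p + sin ((θ₀ - θ) / 2) ^ p)
        = fun x => p / 2 * (sin (x / 2) ^ (p - 1) * cos (x / 2))
            - p / 2 * (sin ((θ₀ - x) / 2) ^ (p - 1) * cos ((θ₀ - x) / 2)) := by
      funext x
      exact (acc_d1 p θ₀ (le_of_lt hp1) x).deriv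
    have hθπ : θ < π := lt_trans hθθ₀ (lt_of_le_of_lt hθ₀s hθsπ)
    have hs1 : 0 < sin (θ / 2) :=
      Real.sin_pos_of_pos_of_lt_pi (by linarith) (by linarith [Real.pi_pos])
    have hu0 : 0 < θ₀ - θ := by linarith
    have huπ : θ₀ - θ < π := by linarith [lt_of_le_of_lt hθ₀s hθsπ]
    have hs2 : 0 < sin ((θ₀ - θ) / 2) :=
      Real.sin_pos_of_pos_of_lt_pi (by linarith) (by linarith [Real.pi_pos])
    rw [hd1, (acc_d2 p θ₀ θ hs1 hs2).deriv]
    have p1 := acc_pos p ⟨hp1, hp2⟩ θ hθ0 (by rw [← hθs]; linarith)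
    have p2 := acc_pos p ⟨hp1, hp2⟩ (θ₀ - θ) hu0 (by rw [← hθs]; linarith)
    linarith
  refine ⟨?_, key⟩
  have hconv : StrictConvexOn ℝ (Set.Icc 0 θ₀)
      (fun θ => sin (θ / 2) ^ p + sin ((θ₀ - θ) / 2) ^ p) := by
    apply strictConvexOn_of_deriv2_pos (convex_Icc 0 θ₀)
    · intro x _
      exact ((acc_d1 p θ₀ (le_of_lt hp1) x).differentiableAt).continuousAt.continuousWithinAt
    · intro x hx
      rw [interior_Icc] at hx
      simpa [Function.iterate_succ, Function.comp] using key x hx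
  exact hconv.convexOn
end

section
/- For every p ∈ (1,2) there exists θ* ∈ (0, π) such that for all θ₀ ∈ (0, θ*] and all θ ∈ [0, θ₀]: sin^p(θ/2) + sin^p((θ₀ − θ)/2) ≤ sin^p(θ₀/2). Equivalently, if A, B are points on the unit circle in ℝ² subtending a central angle θ₀ ≤ θ* and E is any point on the (minor) arc from A to B, then |A − E|^p + |E − B|^p ≤ |A − B|^p, where |·| is the Euclidean norm. -/
open Real


lemma h_mono (p : ℝ) (hp : 1 < p) :
    MonotoneOn (fun t => cos t * sin t ^ (p - 1))
      (Set.Icc 0 (arctan (Real.sqrt (p - 1)))) := by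
  have hp1 : (0:ℝ) < p - 1 := by linarith
  set c := arctan (Real.sqrt (p - 1)) with hc
  have hc2 : c < π / 2 := arctan_lt_pi_div_two _
  have hderiv : ∀ t ∈ Set.Ioo 0 c, HasDerivAt (fun t => cos t * sin t ^ (p - 1))
      (-sin t * sin t ^ (p-1) + cos t * (cos t * (p-1) * sin t ^ (p-1-1))) t := by
    intro t ht
    have hsin : 0 < sin t := sin_pos_of_pos_of_lt_pi ht.1 (lt_trans (lt_trans ht.2 hc2) (by linarith [pi_pos]))
    exact (hasDerivAt_cos t).mul ((hasDerivAt_sin t).rpow_const (Or.inl hsin.ne'))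
  have hint : interior (Set.Icc 0 c) = Set.Ioo 0 c := interior_Icc
  apply monotoneOn_of_deriv_nonneg (convex_Icc _ _)
  · exact (continuous_cos.mul (continuous_sin.rpow_const (fun x => Or.inr hp1.le))).continuousOn
  · rw [hint]; intro t ht; exact ((hderiv t ht).differentiableAt).differentiableWithinAt
  · rw [hint]; intro t ht
    rw [(hderiv t ht).deriv]
    have ht2 : t < π/2 := lt_trans ht.2 hc2
    have hsin : 0 < sin t := sin_pos_of_pos_of_lt_pi ht.1 (by linarith [pi_pos])
    have hcos : 0 < cos t := cos_pos_of_mem_Ioo ⟨by linarith [pi_pos, ht.1], ht2⟩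
    -- tan t ≤ √(p-1)
    have htan : tan t ≤ Real.sqrt (p - 1) := by
      have hmono := Real.tan_lt_tan_of_lt_of_lt_pi_div_two (by linarith [pi_pos, ht.1] : -(π/2) < t) hc2 ht.2
      rw [hc, Real.tan_arctan] at hmono
      exact hmono.le
    have hsq : sin t ^ 2 ≤ (p - 1) * cos t ^ 2 := by
      have h1 : sin t / cos t ≤ Real.sqrt (p-1) := by rw [← tan_eq_sin_div_cos]; exact htan
      have h2 : sin t ≤ Real.sqrt (p-1) * cos t := by
        rw [div_le_iff₀ hcos] at h1; linarith
      nlinarith [Real.sq_sqrt hp1.le, Real.sqrt_nonneg (p-1), hsin]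
    have e1 : sin t ^ (p-1) = sin t ^ (p-1-1) * sin t := by
      rw [show p-1 = (p-1-1)+1 by ring, Real.rpow_add hsin, Real.rpow_one]
      ring_nf
    rw [e1]
    have hpow : (0:ℝ) ≤ sin t ^ (p-1-1) := Real.rpow_nonneg hsin.le _
    nlinarith [hpow, hsq, hsin, hcos]

lemma key (p : ℝ) (hp : 1 < p) {s a : ℝ} (hs : 0 < s)
    (hsc : s ≤ arctan (Real.sqrt (p - 1))) (ha : 0 ≤ a) (ha2 : a ≤ s / 2) :
    sin a ^ p + sin (s - a) ^ p ≤ sin s ^ p := by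
  set c := arctan (Real.sqrt (p - 1)) with hc
  set F : ℝ → ℝ := fun t => sin t ^ p + sin (s - t) ^ p with hF
  have hderiv : ∀ t : ℝ, HasDerivAt F
      (cos t * p * sin t ^ (p-1) + -cos (s-t) * p * sin (s-t) ^ (p-1)) t := by
    intro t
    have h1 : HasDerivAt (fun t => sin t ^ p) (cos t * p * sin t ^ (p-1)) t :=
      (hasDerivAt_sin t).rpow_const (Or.inr hp.le)
    have h2 : HasDerivAt (fun t : ℝ => sin (s - t)) (-cos (s-t)) t := by
      simpa [Function.comp_def] using ((hasDerivAt_sin (s - t)).comp t ((hasDerivAt_id t).const_sub s))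
    exact h1.add (h2.rpow_const (Or.inr hp.le))
  have hanti : AntitoneOn F (Set.Icc 0 (s/2)) := by
    apply antitoneOn_of_deriv_nonpos (convex_Icc _ _)
    · exact (Continuous.add (continuous_sin.rpow_const fun _ => Or.inr (by linarith))
        ((continuous_sin.comp (continuous_const.sub continuous_id)).rpow_const
          fun _ => Or.inr (by linarith))).continuousOn
    · intro t _; exact (hderiv t).differentiableAt.differentiableWithinAt
    · intro t ht
      rw [interior_Icc] at ht
      rw [(hderiv t).deriv]
      have h1 : t ∈ Set.Icc (0:ℝ) c := ⟨ht.1.le, le_trans (by linarith [ht.2]) hsc⟩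
      have h2 : s - t ∈ Set.Icc (0:ℝ) c := ⟨by linarith [ht.2], le_trans (by linarith [ht.1]) hsc⟩
      have := h_mono p hp h1 h2 (by linarith [ht.2])
      simp only at this
      nlinarith [this, hp]
  have h0 : (0:ℝ) ∈ Set.Icc (0:ℝ) (s/2) := ⟨le_refl _, by linarith⟩
  have haI : a ∈ Set.Icc (0:ℝ) (s/2) := ⟨ha, ha2⟩
  have := hanti h0 haI ha
  simpa [hF, Real.zero_rpow (by linarith : p ≠ 0)] using this


/-- For `p ∈ (1,2)` there is `θ* ∈ (0,π)` such that for all `θ₀ ∈ (0,θ*]` and all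
`θ ∈ [0,θ₀]`: `sin^p(θ/2) + sin^p((θ₀-θ)/2) ≤ sin^p(θ₀/2)`.  Equivalently, if `A, B` lie
on the unit circle subtending a central angle `θ₀` and `E` is any point on the arc from
`A` to `B`, then `|A-E|^p + |E-B|^p ≤ |A-B|^p`. -/
theorem arc_chord_power_inequality (p : ℝ) (hp : p ∈ Set.Ioo (1 : ℝ) 2) :
    ∃ θs ∈ Set.Ioo (0 : ℝ) π, ∀ θ₀ ∈ Set.Ioc (0 : ℝ) θs, ∀ θ ∈ Set.Icc (0 : ℝ) θ₀,
      sin (θ / 2) ^ p + sin ((θ₀ - θ) / 2) ^ p ≤ sin (θ₀ / 2) ^ p := by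
  obtain ⟨hp1, hp2⟩ := hp
  set c := arctan (Real.sqrt (p - 1)) with hc
  have hcpos : 0 < c := by
    rw [hc, ← arctan_zero]
    exact Real.arctan_strictMono (Real.sqrt_pos.mpr (by linarith) : (0:ℝ) < Real.sqrt (p-1))
  have hclt : c < π := lt_trans (arctan_lt_pi_div_two _) (by linarith [pi_pos])
  refine ⟨c, ⟨hcpos, hclt⟩, fun θ₀ hθ₀ θ hθ => ?_⟩
  obtain ⟨hθ₀0, hθ₀c⟩ := hθ₀
  obtain ⟨hθ0, hθθ₀⟩ := hθ
  have hs : (0:ℝ) < θ₀ / 2 := by linarith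
  have hsc : θ₀ / 2 ≤ c := by linarith
  rcases le_or_gt θ (θ₀ - θ) with h | h
  · have := key p hp1 hs hsc (by linarith : (0:ℝ) ≤ θ/2) (by linarith : θ/2 ≤ θ₀/2/2)
    rwa [show θ₀/2 - θ/2 = (θ₀-θ)/2 by ring] at this
  · have := key p hp1 hs hsc (by linarith : (0:ℝ) ≤ (θ₀-θ)/2)
      (by linarith : (θ₀-θ)/2 ≤ θ₀/2/2)
    rw [show θ₀/2 - (θ₀-θ)/2 = θ/2 by ring] at this
    linarith
end

section
/- For every p ∈ (1,2) there exists θ* ∈ (0, π) such that for all θ₀ ∈ (0, θ*], the circular arc y : [0,1] → ℝ², y_t = (cos(tθ₀), sin(tθ₀)), satisfies ‖y‖_{p-var} = |y_1 − y_0| = 2 sin(θ₀/2), i.e. the p-variation of the arc equals the length of its chord. -/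
open Real

/-- The `p`-variation of a path `z : [0,1] → ℝ²`: the supremum, over all finite partitions
`0 = t_0 < t_1 < ⋯ < t_n = 1`, of `(∑ |z_{t_i} - z_{t_{i-1}}|^p)^{1/p}`. -/
noncomputable def pVar (p : ℝ) (z : ℝ → EuclideanSpace ℝ (Fin 2)) : ℝ :=
  sSup {v : ℝ | ∃ (n : ℕ) (t : Fin (n + 1) → ℝ), StrictMono t ∧ t 0 = 0 ∧
    t (Fin.last n) = 1 ∧
    v = (∑ k : Fin n, ‖z (t k.succ) - z (t k.castSucc)‖ ^ p) ^ (1 / p)}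

/-- The circular arc `y_t = (cos(tθ₀), sin(tθ₀))` on the unit circle. -/
noncomputable def arcPath (θ₀ : ℝ) (t : ℝ) : EuclideanSpace ℝ (Fin 2) :=
  (WithLp.equiv 2 (Fin 2 → ℝ)).symm ![cos (t * θ₀), sin (t * θ₀)]



lemma arc_norm (θ b c : ℝ) : ‖arcPath θ b - arcPath θ c‖ = 2 * |sin ((b - c) * θ / 2)| := by
  rw [EuclideanSpace.norm_eq]
  have key : ∑ i : Fin 2, ‖(arcPath θ b - arcPath θ c) i‖ ^ 2 = (2 * sin ((b - c) * θ / 2)) ^ 2 := by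
    have hab : (arcPath θ b - arcPath θ c) 0 = cos (b*θ) - cos (c*θ) := by
      simp [arcPath]
    have hab1 : (arcPath θ b - arcPath θ c) 1 = sin (b*θ) - sin (c*θ) := by
      simp [arcPath]
    rw [Fin.sum_univ_two, hab, hab1, Real.norm_eq_abs, Real.norm_eq_abs, sq_abs, sq_abs]
    have h2 : cos (b*θ - c*θ) = 1 - 2 * sin ((b - c) * θ / 2) ^ 2 := by
      rw [show b*θ - c*θ = 2*((b - c)*θ/2) by ring, Real.cos_two_mul', Real.sin_sq]; ring
    have h1 := Real.cos_sub (b*θ) (c*θ)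
    nlinarith [sin_sq_add_cos_sq (b*θ), sin_sq_add_cos_sq (c*θ)]
  rw [key, Real.sqrt_sq_eq_abs, abs_mul, abs_two]


-- x cos x ≤ sin x on [0, π/2)
lemma mul_cos_le_sin {x : ℝ} (hx : 0 ≤ x) (hx2 : x < π / 2) : x * cos x ≤ sin x := by
  rcases eq_or_lt_of_le hx with rfl | hx'
  · simp
  · have h := Real.lt_tan hx' hx2
    have hc : 0 < cos x := Real.cos_pos_of_mem_Ioo ⟨by linarith [Real.pi_pos], hx2⟩
    rw [Real.tan_eq_sin_div_cos, lt_div_iff₀ hc] at h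
    linarith

-- tangent line inequality for rpow
lemma rpow_tangent {x y p : ℝ} (hx : 0 < x) (hy : 0 ≤ y) (hp : 1 ≤ p) :
    x ^ p + p * x ^ (p - 1) * y ≤ (x + y) ^ p := by
  have hs : (-1 : ℝ) ≤ y / x := by
    have : (0:ℝ) ≤ y / x := by positivity
    linarith
  have hb := one_add_mul_self_le_rpow_one_add hs hp
  have hxy : x + y = x * (1 + y / x) := by field_simp
  have h1 : (0:ℝ) ≤ 1 + y / x := by positivity
  calc x ^ p + p * x ^ (p - 1) * y = x ^ p * (1 + p * (y / x)) := by
        rw [Real.rpow_sub hx]; field_simp; rw [Real.rpow_one]; ring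
    _ ≤ x ^ p * (1 + y / x) ^ p := by
        apply mul_le_mul_of_nonneg_left hb (Real.rpow_nonneg hx.le p)
    _ = (x + y) ^ p := by rw [hxy, Real.mul_rpow hx.le h1]

lemma sin_superadd {p a u v : ℝ} (hp1 : 1 < p) (hp2 : p < 2)
    (ha2 : a < π / 2) (hpa : 1 ≤ p * cos a ^ 2)
    (hu : 0 ≤ u) (hv : 0 ≤ v) (hvu : v ≤ u) (huv : u + v ≤ a) :
    sin u ^ p + sin v ^ p ≤ sin (u + v) ^ p := by
  have ha0 : 0 ≤ a := le_trans (by linarith) huv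
  have hca : 0 < cos a := Real.cos_pos_of_mem_Ioo ⟨by linarith [Real.pi_pos], ha2⟩
  rcases eq_or_lt_of_le hv with rfl | hv'
  · simp [Real.zero_rpow (by linarith : p ≠ 0)]
  have hu' : 0 < u := lt_of_lt_of_le hv' hvu
  have hupi : u < π / 2 := by linarith
  have huvpi : u + v < π / 2 := by linarith
  have hsu : 0 < sin u := Real.sin_pos_of_pos_of_lt_pi hu' (by linarith [Real.pi_gt_three])
  -- key1 : sin u + v * cos (u + v) ≤ sin (u + v)
  have key1 : sin u + v * cos (u + v) ≤ sin (u + v) := by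
    have hid : sin (u + v) - sin u = 2 * sin (v / 2) * cos (u + v / 2) := by
      rw [Real.sin_sub_sin]; ring_nf
    have h1 : (v / 2) * cos (v / 2) ≤ sin (v / 2) := mul_cos_le_sin (by linarith) (by linarith)
    have hc1 : cos (u + v) ≤ cos (u + v / 2) :=
      Real.cos_le_cos_of_nonneg_of_le_pi (by linarith) (by linarith [Real.pi_gt_three]) (by linarith)
    have hc2 : cos (u + v) ≤ cos (v / 2) * cos (u + v / 2) := by
      have := Real.cos_add (v / 2) (u + v / 2)
      have hs1 : 0 ≤ sin (v / 2) := Real.sin_nonneg_of_nonneg_of_le_pi (by linarith) (by linarith [Real.pi_gt_three])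
      have hs2 : 0 ≤ sin (u + v / 2) := Real.sin_nonneg_of_nonneg_of_le_pi (by linarith) (by linarith [Real.pi_gt_three])
      have hxy : v / 2 + (u + v / 2) = u + v := by ring
      rw [← hxy, this]
      nlinarith [mul_nonneg hs1 hs2]
    have hcm : 0 ≤ cos (u + v / 2) := by
      apply Real.cos_nonneg_of_mem_Icc; constructor <;> [linarith [Real.pi_pos]; linarith]
    nlinarith [mul_le_mul_of_nonneg_right h1 hcm,
      mul_le_mul_of_nonneg_left hc2 hv]
  have hapi : a ≤ π := by linarith [Real.pi_pos]
  have hcuv : 0 ≤ cos (u + v) := Real.cos_nonneg_of_mem_Icc ⟨by linarith [Real.pi_pos], by linarith⟩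
  have key2 : sin u ^ p + p * sin u ^ (p - 1) * (v * cos (u + v)) ≤ sin (u + v) ^ p := by
    calc sin u ^ p + p * sin u ^ (p - 1) * (v * cos (u + v))
        ≤ (sin u + v * cos (u + v)) ^ p := rpow_tangent hsu (by positivity) hp1.le
      _ ≤ sin (u + v) ^ p := Real.rpow_le_rpow (by positivity) key1 (by linarith)
  have key3 : sin v ^ p ≤ p * sin u ^ (p - 1) * (v * cos (u + v)) := by
    set S := sin u ^ (p - 1) with hSdef
    set U := u ^ (p - 1) with hUdef
    set V := v ^ (p - 1) with hVdef
    have hU0 : 0 ≤ U := Real.rpow_nonneg hu _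
    have hsv : 0 ≤ sin v := Real.sin_nonneg_of_nonneg_of_le_pi hv (by linarith [Real.pi_gt_three])
    have h1 : sin v ^ p ≤ v ^ p := Real.rpow_le_rpow hsv (Real.sin_le hv) (by linarith)
    have h2 : v ^ (p - 1) * v = v ^ p := by
      have := (Real.rpow_add hv' (p - 1) 1).symm
      rw [Real.rpow_one, sub_add_cancel] at this
      exact this
    have h3 : V ≤ U := Real.rpow_le_rpow hv hvu (by linarith)
    have hcau : cos a ≤ cos u := Real.cos_le_cos_of_nonneg_of_le_pi hu hapi (by linarith)
    have h4 : u * cos a ≤ sin u :=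
      le_trans (mul_le_mul_of_nonneg_left hcau hu) (mul_cos_le_sin hu hupi)
    have h5 : (u * cos a) ^ (p - 1) ≤ S := Real.rpow_le_rpow (by positivity) h4 (by linarith)
    have h6 : (u * cos a) ^ (p - 1) = U * cos a ^ (p - 1) := Real.mul_rpow hu hca.le
    have h7 : cos a ≤ cos a ^ (p - 1) := by
      have := Real.rpow_le_rpow_of_exponent_ge hca (Real.cos_le_one a)
        (show p - 1 ≤ 1 by linarith)
      rwa [Real.rpow_one] at this
    have hS : U * cos a ≤ S := by
      calc U * cos a ≤ U * cos a ^ (p - 1) := mul_le_mul_of_nonneg_left h7 hU0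
        _ = (u * cos a) ^ (p - 1) := h6.symm
        _ ≤ S := h5
    have hC : cos a ≤ cos (u + v) := Real.cos_le_cos_of_nonneg_of_le_pi (by linarith) hapi huv
    have e0 : (U * cos a) * cos a ≤ S * cos (u + v) :=
      mul_le_mul hS hC hca.le (le_trans (by positivity) hS)
    have e1 : p * v * ((U * cos a) * cos a) ≤ p * v * (S * cos (u + v)) :=
      mul_le_mul_of_nonneg_left e0 (by positivity)
    have e3 : U * v ≤ p * cos a ^ 2 * (U * v) := by nlinarith [mul_nonneg hU0 hv]
    have e4 : V * v ≤ U * v := mul_le_mul_of_nonneg_right h3 hv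
    calc sin v ^ p ≤ v ^ p := h1
      _ = V * v := h2.symm
      _ ≤ U * v := e4
      _ ≤ p * cos a ^ 2 * (U * v) := e3
      _ = p * v * ((U * cos a) * cos a) := by ring
      _ ≤ p * v * (S * cos (u + v)) := e1
      _ = p * S * (v * cos (u + v)) := by ring
  linarith [key2, key3]

lemma sum_sin_rpow {p a : ℝ} (hp1 : 1 < p) (hp2 : p < 2) (ha2 : a < π / 2)
    (hpa : 1 ≤ p * cos a ^ 2) :
    ∀ (n : ℕ) (x : Fin n → ℝ), (∀ i, 0 ≤ x i) → (∑ i, x i) ≤ a →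
      ∑ i, sin (x i) ^ p ≤ sin (∑ i, x i) ^ p := by
  intro n
  induction n with
  | zero =>
    intro x hx hs
    simp [Real.zero_rpow (show p ≠ 0 by linarith)]
  | succ n ih =>
    intro x hx hs
    rw [Fin.sum_univ_succ, Fin.sum_univ_succ]
    rw [Fin.sum_univ_succ] at hs
    set s := ∑ i : Fin n, x i.succ with hsdef
    have hs0 : 0 ≤ s := Finset.sum_nonneg fun i _ => hx _
    have hx0 : 0 ≤ x 0 := hx 0
    have h1 : ∑ i : Fin n, sin (x i.succ) ^ p ≤ sin s ^ p :=
      ih (fun i => x i.succ) (fun i => hx _) (by linarith)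
    have h2 : sin (x 0) ^ p + sin s ^ p ≤ sin (x 0 + s) ^ p := by
      rcases le_total (x 0) s with h | h
      · have := sin_superadd hp1 hp2 ha2 hpa hs0 hx0 h (by linarith)
        rw [add_comm s (x 0)] at this
        linarith
      · exact sin_superadd hp1 hp2 ha2 hpa hx0 hs0 h hs
    linarith

lemma tele {n : ℕ} (t : Fin (n + 1) → ℝ) :
    ∑ k : Fin n, (t k.succ - t k.castSucc) = t (Fin.last n) - t 0 := by
  set f : ℕ → ℝ := fun i => t ⟨min i n, Nat.lt_succ_of_le (min_le_right _ _)⟩ with hf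
  have e : ∑ k : Fin n, (t k.succ - t k.castSucc) = ∑ i ∈ Finset.range n, (f (i+1) - f i) := by
    rw [← Fin.sum_univ_eq_sum_range (fun i => f (i+1) - f i) n]
    refine Finset.sum_congr rfl fun k _ => ?_
    have h1 : f (k.val + 1) = t k.succ := by
      simp only [hf]
      congr 1
      exact Fin.ext (by simp [Nat.min_eq_left (Nat.succ_le_of_lt k.isLt)])
    have h2 : f k.val = t k.castSucc := by
      simp only [hf]
      congr 1
      exact Fin.ext (by simp [Nat.min_eq_left (le_of_lt k.isLt)])
    rw [h1, h2]
  rw [e, Finset.sum_range_sub]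
  have hfn : f n = t (Fin.last n) := by simp only [hf]; congr 1; exact Fin.ext (by simp)
  have hf0 : f 0 = t 0 := by simp only [hf]; congr 1
  rw [hfn, hf0]


/-- For `p ∈ (1,2)` there is `θ* ∈ (0,π)` such that for all `θ₀ ∈ (0,θ*]`, the
`p`-variation of the circular arc of central angle `θ₀` equals the length of its chord:
`‖y‖_{p-var} = |y_1 - y_0| = 2 sin(θ₀/2)`. -/
theorem arc_pVariation_eq_chord (p : ℝ) (hp : p ∈ Set.Ioo (1 : ℝ) 2) :
    ∃ θs ∈ Set.Ioo (0 : ℝ) π, ∀ θ₀ ∈ Set.Ioc (0 : ℝ) θs,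
      pVar p (arcPath θ₀) = ‖arcPath θ₀ 1 - arcPath θ₀ 0‖ ∧
      pVar p (arcPath θ₀) = 2 * sin (θ₀ / 2) := by
  obtain ⟨hp1, hp2⟩ := hp
  have hp0 : p ≠ 0 := by linarith
  have hppos : 0 < p := by linarith
  have hips : (0:ℝ) < p⁻¹ := by positivity
  have hips1 : p⁻¹ < 1 := by
    rw [inv_lt_one_iff₀]; right; exact hp1
  have hsq0 : 0 < Real.sqrt p⁻¹ := Real.sqrt_pos.2 hips
  have hsq1 : Real.sqrt p⁻¹ < 1 := by
    have := Real.sqrt_lt_sqrt hips.le hips1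
    rwa [Real.sqrt_one] at this
  set a : ℝ := Real.arccos (Real.sqrt p⁻¹) with hadef
  have hca : cos a = Real.sqrt p⁻¹ := Real.cos_arccos (by linarith) hsq1.le
  have ha0 : 0 < a := Real.arccos_pos.2 hsq1
  have ha2 : a < π / 2 := Real.arccos_lt_pi_div_two.2 hsq0
  have hpa : 1 ≤ p * cos a ^ 2 := by
    rw [hca, Real.sq_sqrt hips.le, mul_inv_cancel₀ hp0]
  refine ⟨a, ⟨ha0, by linarith [Real.pi_gt_three]⟩, ?_⟩
  rintro θ₀ ⟨hθ0, hθa⟩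
  set α : ℝ := θ₀ / 2 with hαdef
  have hα0 : 0 < α := by positivity
  have hαa : α ≤ a := by simp only [hαdef]; linarith
  have hαpi : α < π := by linarith [Real.pi_gt_three]
  have hsinα : 0 ≤ sin α := Real.sin_nonneg_of_nonneg_of_le_pi hα0.le hαpi.le
  -- the chord
  have chord : ‖arcPath θ₀ 1 - arcPath θ₀ 0‖ = 2 * sin α := by
    rw [arc_norm]
    have e : (1 - 0 : ℝ) * θ₀ / 2 = α := by rw [hαdef]; ring
    rw [e, abs_of_nonneg hsinα]
  -- membership of the trivial partition
  have mem : 2 * sin α ∈ {v : ℝ | ∃ (n : ℕ) (t : Fin (n + 1) → ℝ), StrictMono t ∧ t 0 = 0 ∧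
      t (Fin.last n) = 1 ∧
      v = (∑ k : Fin n, ‖arcPath θ₀ (t k.succ) - arcPath θ₀ (t k.castSucc)‖ ^ p) ^ (1 / p)} := by
    refine ⟨1, ![0, 1], ?_, by simp, by simp [Fin.last], ?_⟩
    · intro i j hij
      fin_cases i <;> fin_cases j <;> simp_all
    · rw [Fin.sum_univ_one]
      have e1 : (![0, 1] : Fin 2 → ℝ) ((0 : Fin 1).succ) = 1 := by simp
      have e2 : (![0, 1] : Fin 2 → ℝ) ((0 : Fin 1).castSucc) = 0 := by simp
      rw [e1, e2, chord, ← Real.rpow_mul (mul_nonneg (by norm_num) hsinα),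
        mul_one_div_cancel hp0, Real.rpow_one]
  -- upper bound
  have ub : ∀ v ∈ {v : ℝ | ∃ (n : ℕ) (t : Fin (n + 1) → ℝ), StrictMono t ∧ t 0 = 0 ∧
      t (Fin.last n) = 1 ∧
      v = (∑ k : Fin n, ‖arcPath θ₀ (t k.succ) - arcPath θ₀ (t k.castSucc)‖ ^ p) ^ (1 / p)},
      v ≤ 2 * sin α := by
    rintro v ⟨n, t, hmono, h0, h1, rfl⟩
    set x : Fin n → ℝ := fun k => (t k.succ - t k.castSucc) * α with hxdef
    have hx0 : ∀ k, 0 ≤ x k := fun k =>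
      mul_nonneg (by linarith [hmono (Fin.castSucc_lt_succ : k.castSucc < k.succ)]) hα0.le
    have hxsum : (∑ k, x k) = α := by
      simp only [hxdef, ← Finset.sum_mul, tele t, h1, h0]; ring
    have hxle : ∀ k, x k ≤ α := by
      intro k
      have hb1 : t k.succ ≤ 1 := h1 ▸ hmono.monotone (Fin.le_last _)
      have hb2 : 0 ≤ t k.castSucc := h0 ▸ hmono.monotone (Fin.zero_le _)
      simp only [hxdef]
      nlinarith
    have hsinx : ∀ k, 0 ≤ sin (x k) := fun k =>
      Real.sin_nonneg_of_nonneg_of_le_pi (hx0 k) (by linarith [hxle k])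
    have hterm : ∀ k : Fin n, ‖arcPath θ₀ (t k.succ) - arcPath θ₀ (t k.castSucc)‖
        = 2 * sin (x k) := by
      intro k
      rw [arc_norm]
      have e : (t k.succ - t k.castSucc) * θ₀ / 2 = x k := by simp only [hxdef, hαdef]; ring
      rw [e, abs_of_nonneg (hsinx k)]
    have hsum : (∑ k : Fin n, ‖arcPath θ₀ (t k.succ) - arcPath θ₀ (t k.castSucc)‖ ^ p)
        ≤ (2 * sin α) ^ p := by
      calc (∑ k : Fin n, ‖arcPath θ₀ (t k.succ) - arcPath θ₀ (t k.castSucc)‖ ^ p)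
          = ∑ k : Fin n, (2:ℝ) ^ p * sin (x k) ^ p := by
            refine Finset.sum_congr rfl fun k _ => ?_
            rw [hterm k, Real.mul_rpow (by norm_num) (hsinx k)]
        _ = (2:ℝ) ^ p * ∑ k : Fin n, sin (x k) ^ p := by rw [Finset.mul_sum]
        _ ≤ (2:ℝ) ^ p * sin α ^ p := by
            apply mul_le_mul_of_nonneg_left _ (Real.rpow_nonneg (by norm_num) p)
            have := sum_sin_rpow hp1 hp2 ha2 hpa n x hx0 (by rw [hxsum]; exact hαa)
            rwa [hxsum] at this
        _ = (2 * sin α) ^ p := (Real.mul_rpow (by norm_num) hsinα).symm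
    have hle : (∑ k : Fin n, ‖arcPath θ₀ (t k.succ) - arcPath θ₀ (t k.castSucc)‖ ^ p) ^ (1/p)
        ≤ ((2 * sin α) ^ p) ^ (1/p) :=
      Real.rpow_le_rpow (Finset.sum_nonneg fun k _ => Real.rpow_nonneg (norm_nonneg _) p)
        hsum (by positivity)
    rwa [← Real.rpow_mul (mul_nonneg (by norm_num) hsinα), mul_one_div_cancel hp0,
      Real.rpow_one] at hle
  have hval : pVar p (arcPath θ₀) = 2 * sin α := by
    unfold pVar
    exact le_antisymm (csSup_le ⟨_, mem⟩ ub) (le_csSup ⟨_, ub⟩ mem)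
  exact ⟨by rw [hval, chord], hval⟩
end

section
/- Let p ∈ (1,2), θ₀ > 0 and ε > 0. Then for every c ∈ [0, θ₀]: (c + ε)^p − c^p ≤ max{ (√ε + ε)^p , θ₀^p ((1 + √ε)^p − 1) }. -/
/-- For `p ∈ (1,2)`, `θ₀ > 0`, `ε > 0` and every `c ∈ [0,θ₀]`:
`(c+ε)^p - c^p ≤ max{(√ε+ε)^p, θ₀^p ((1+√ε)^p - 1)}`. -/
theorem spike_increment_bound (p θ₀ ε : ℝ) (hp : p ∈ Set.Ioo (1 : ℝ) 2)
    (hθ₀ : 0 < θ₀) (hε : 0 < ε) (c : ℝ) (hc : c ∈ Set.Icc (0 : ℝ) θ₀) :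
    (c + ε) ^ p - c ^ p ≤
      max ((Real.sqrt ε + ε) ^ p) (θ₀ ^ p * ((1 + Real.sqrt ε) ^ p - 1)) := by
  obtain ⟨hc0, hcθ⟩ := hc
  have hp1 : (1:ℝ) < p := hp.1
  have hp0 : (0:ℝ) ≤ p := by linarith
  have hs : 0 < Real.sqrt ε := Real.sqrt_pos.mpr hε
  rcases le_or_gt c (Real.sqrt ε) with h | h
  · refine le_max_of_le_left ?_
    have h1 : (c + ε) ^ p ≤ (Real.sqrt ε + ε) ^ p :=
      Real.rpow_le_rpow (by linarith) (by linarith) hp0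
    have h2 : 0 ≤ c ^ p := Real.rpow_nonneg hc0 p
    linarith
  · refine le_max_of_le_right ?_
    have hcpos : 0 < c := lt_trans hs h
    have hdiv : ε / c ≤ Real.sqrt ε := by
      rw [div_le_iff₀ hcpos]
      calc ε = Real.sqrt ε * Real.sqrt ε := (Real.mul_self_sqrt hε.le).symm
        _ ≤ Real.sqrt ε * c := by nlinarith
    have key : (c + ε) ^ p = c ^ p * (1 + ε / c) ^ p := by
      rw [← Real.mul_rpow hc0 (by positivity)]
      congr 1
      field_simp
    rw [key]
    have h1 : c ^ p ≤ θ₀ ^ p := Real.rpow_le_rpow hc0 hcθ hp0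
    have h2 : (1 + ε / c) ^ p ≤ (1 + Real.sqrt ε) ^ p :=
      Real.rpow_le_rpow (by positivity) (by linarith) hp0
    have h3 : (1:ℝ) ≤ (1 + ε / c) ^ p :=
      Real.one_le_rpow (by nlinarith [div_pos hε hcpos]) hp0
    have h4 : 0 ≤ c ^ p := Real.rpow_nonneg hc0 p
    nlinarith [Real.rpow_nonneg hθ₀.le p]
end
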